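/- Let G be a 2-connected finite simple graph with n ≥ 4 vertices such that every cycle of G (not necessarily induced) has length exactly 4. Then G is isomorphic to the complete bipartite graph K_{2,n−2}. -/

import Mathlib

open SimpleGraph

/-- `G` is 2-connected: connected, at least 3 vertices, and no cut vertex,
i.e. deleting any vertex leaves the graph connected. -/
def TwoConnected {V : Type*} [Fintype V] (G : SimpleGraph V) : Prop :=
  G.Connected ∧ 3 ≤ Fintype.card V ∧ ∀ v : V, (G.induce {u | u ≠ v}).Connected

namespace Stmt13Aux

variable {V : Type*} [DecidableEq V] {G : SimpleGraph V}

omit [DecidableEq V] in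
lemma noTri (hcyc : ∀ (v : V) (c : G.Walk v v), c.IsCycle → c.length = 4)
    {a b c : V} (hab : G.Adj a b) (hbc : G.Adj b c) (hca : G.Adj c a) : False := by
  have hac : a ≠ c := fun h => (h ▸ hca).ne rfl
  have hc4 : (Walk.cons hab (Walk.cons hbc (Walk.cons hca Walk.nil))).IsCycle := by
    rw [Walk.cons_isCycle_iff]
    constructor
    · simp [Walk.isPath_def, hbc.ne, hca.ne, hac.symm, hab.ne']
    · simp [hab.ne, hac, hbc.ne, Sym2.eq_iff]
  have := hcyc a _ hc4
  simp at this

omit [DecidableEq V] in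
lemma noSix (hcyc : ∀ (v : V) (c : G.Walk v v), c.IsCycle → c.length = 4)
    {v1 v2 v3 v4 v5 v6 : V}
    (h12 : G.Adj v1 v2) (h23 : G.Adj v2 v3) (h34 : G.Adj v3 v4)
    (h45 : G.Adj v4 v5) (h56 : G.Adj v5 v6) (h61 : G.Adj v6 v1)
    (h13 : v1 ≠ v3) (h14 : v1 ≠ v4) (h15 : v1 ≠ v5)
    (h24 : v2 ≠ v4) (h25 : v2 ≠ v5) (h26 : v2 ≠ v6)
    (h35 : v3 ≠ v5) (h36 : v3 ≠ v6) (h46 : v4 ≠ v6) : False := by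
  have hc6 : (Walk.cons h12 (Walk.cons h23 (Walk.cons h34 (Walk.cons h45
      (Walk.cons h56 (Walk.cons h61 Walk.nil)))))).IsCycle := by
    rw [Walk.cons_isCycle_iff]
    constructor
    · simp [Walk.isPath_def, h23.ne, h34.ne, h45.ne, h56.ne, h61.ne', h24, h25, h26, h35, h36,
        h46, h13.symm, h14.symm, h15.symm, h12.ne', h61.ne]
    · simp [Sym2.eq_iff, h12.ne, h12.ne', h13, h14, h15, h26.symm, h61.ne, h61.ne', h23.ne,
        h24, h25, h26]
  have := hcyc v1 _ hc6
  simp at this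

lemma firstHit (S : Set V) {a : V} :
    ∀ {w t : V} (p : G.Walk w t), t ∈ S → a ∉ p.support → w ∉ S →
    ∃ z ∈ S, ∃ q : G.Walk w z, q.IsPath ∧ a ∉ q.support ∧
      ∀ u ∈ q.support, u ∈ S → u = z := by
  have walkver : ∀ {w t : V} (p : G.Walk w t), t ∈ S → a ∉ p.support → w ∉ S →
      ∃ z ∈ S, ∃ q : G.Walk w z, a ∉ q.support ∧ ∀ u ∈ q.support, u ∈ S → u = z := by
    intro w t p
    induction p with
    | nil => intro ht _ hw; exact absurd ht hw
    | @cons w m t h p ih =>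
      intro ht ha hw
      rw [Walk.support_cons, List.mem_cons] at ha
      push_neg at ha
      by_cases hm : m ∈ S
      · refine ⟨m, hm, Walk.cons h Walk.nil, ?_, ?_⟩
        · intro hmem
          simp only [Walk.support_cons, Walk.support_nil, List.mem_cons,
            List.not_mem_nil, or_false] at hmem
          rcases hmem with rfl | rfl
          · exact ha.1 rfl
          · exact ha.2 p.start_mem_support
        · intro u hu huS
          simp only [Walk.support_cons, Walk.support_nil, List.mem_cons,
            List.mem_singleton, List.not_mem_nil, or_false] at hu
          rcases hu with rfl | rfl
          · exact absurd huS hw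
          · rfl
      · obtain ⟨z, hz, q, hqa, hq⟩ := ih ht ha.2 hm
        refine ⟨z, hz, Walk.cons h q, ?_, ?_⟩
        · simp only [Walk.support_cons, List.mem_cons]
          push_neg
          exact ⟨ha.1, hqa⟩
        · intro u hu huS
          simp only [Walk.support_cons, List.mem_cons] at hu
          rcases hu with rfl | hu
          · exact absurd huS hw
          · exact hq u hu huS
  intro w t p ht ha hw
  obtain ⟨z, hz, q, hqa, hq⟩ := walkver p ht ha hw
  exact ⟨z, hz, q.bypass, q.bypass_isPath,
    fun hh => hqa (q.support_bypass_subset hh),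
    fun u hu huS => hq u (q.support_bypass_subset hu) huS⟩

omit [DecidableEq V] in
lemma buildCycle {a w z : V} (haw : G.Adj a w) (q : G.Walk w z) (r : G.Walk z a)
    (hq : q.IsPath) (hr : r.IsPath)
    (hdisj : ∀ u ∈ q.support, u ∈ r.support → u = z)
    (ha : a ∉ q.support) (hw : w ∉ r.support)
    (he : s(a, w) ∉ r.edges) :
    (Walk.cons haw (q.append r)).IsCycle := by
  rw [Walk.cons_isCycle_iff]
  constructor
  · rw [Walk.isPath_def, Walk.support_append, List.nodup_append]
    refine ⟨hq.support_nodup, ?_, ?_⟩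
    · exact (hr.support_nodup).tail
    · intro u huq u' hur huv; rw [← huv] at hur
      have hz : u = z := hdisj u huq (List.mem_of_mem_tail hur)
      subst hz
      have : u ∉ r.support.tail := by
        have := hr.support_nodup
        rw [r.support_eq_cons] at this
        exact (List.nodup_cons.mp this).1
      exact this hur
  · rw [Walk.edges_append, List.mem_append]
    rintro (h1 | h2)
    · exact ha (Walk.fst_mem_support_of_mem_edges q h1)
    · exact he h2

lemma key (hcyc : ∀ (v : V) (c : G.Walk v v), c.IsCycle → c.length = 4)
    {a x b y : V} (hax : G.Adj a x) (hxb : G.Adj x b) (hby : G.Adj b y) (hya : G.Adj y a)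
    (hab : a ≠ b) (hxy : x ≠ y)
    (hconn : (G.induce {u | u ≠ a}).Connected)
    {w : V} (hwa : w ≠ a) (hwx : w ≠ x) (hwb : w ≠ b) (hwy : w ≠ y)
    (haw : G.Adj a w) : G.Adj b w := by
  have hxa : x ≠ a := hax.ne'
  obtain ⟨p0⟩ := hconn.preconnected (⟨w, hwa⟩ : {u | u ≠ a}) ⟨x, hxa⟩
  set p : G.Walk w x := p0.map (Embedding.induce {u | u ≠ a}).toHom with hp
  have hpa : a ∉ p.support := by
    intro hm
    simp only [hp, Walk.support_map] at hm
    obtain ⟨⟨m', hm'⟩, _, hme⟩ := List.mem_map.mp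
      (Eq.mp (congrArg (a ∈ ·) (Walk.support_map (Embedding.induce {u | u ≠ a}).toHom p0)) hm)
    exact hm' hme
  have hS : (x : V) ∈ ({x, b, y} : Set V) := by simp
  have hwS : w ∉ ({x, b, y} : Set V) := by simp [hwx, hwb, hwy]
  obtain ⟨z, hz, q, hqp, hqa, hqS⟩ := firstHit ({x, b, y} : Set V) p hS hpa hwS
  have hqw : w ∉ ({x, b, y, a} : Set V) := by simp [hwx, hwb, hwy, hwa]
  have harc : ∀ (r : G.Walk z a), r.IsPath → (∀ u ∈ r.support, u ∈ ({x, b, y, a} : Set V)) →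
      q.length + r.length + 1 = 4 := by
    intro r hr hrsub
    have hdisj : ∀ u ∈ q.support, u ∈ r.support → u = z := by
      intro u huq hur
      have := hrsub u hur
      rcases this with rfl | rfl | rfl | rfl
      · exact hqS u huq (by simp)
      · exact hqS u huq (by simp)
      · exact hqS u huq (by simp)
      · exact absurd huq hqa
    have hwr : w ∉ r.support := fun hh => hqw (hrsub w hh)
    have he : s(a, w) ∉ r.edges := by
      intro hh
      exact hqw (hrsub w (Walk.snd_mem_support_of_mem_edges r hh))
    have hc := buildCycle haw q r hqp hr hdisj hqa hwr he
    have := hcyc a _ hc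
    rw [Walk.length_cons, Walk.length_append] at this
    omega
  rcases hz with rfl | rfl | rfl
  · have h1 := harc (Walk.cons hax.symm Walk.nil) (by simp [Walk.isPath_def, hxa])
      (by intro u hu; simp at hu; rcases hu with rfl | rfl <;> simp)
    have h3 := harc (Walk.cons hxb (Walk.cons hby (Walk.cons hya Walk.nil)))
      (by simp [Walk.isPath_def, hxb.ne, hby.ne, hya.ne, hxy, hab.symm, hxa])
      (by intro u hu; simp at hu; rcases hu with rfl | rfl | rfl | rfl <;> simp)
    rw [Walk.length_cons, Walk.length_cons, Walk.length_cons, Walk.length_nil] at h3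
    rw [Walk.length_cons, Walk.length_nil] at h1
    omega
  · have h1 := harc (Walk.cons hby (Walk.cons hya Walk.nil))
      (by simp [Walk.isPath_def, hby.ne, hya.ne, hab.symm])
      (by intro u hu; simp at hu; rcases hu with rfl | rfl | rfl <;> simp)
    rw [Walk.length_cons, Walk.length_cons, Walk.length_nil] at h1
    have : q.length = 1 := by omega
    exact (q.adj_of_length_eq_one this).symm
  · have h1 := harc (Walk.cons hya Walk.nil) (by simp [Walk.isPath_def, hya.ne])
      (by intro u hu; simp at hu; rcases hu with rfl | rfl <;> simp)
    have h3 := harc (Walk.cons hby.symm (Walk.cons hxb.symm (Walk.cons hax.symm Walk.nil)))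
      (by simp [Walk.isPath_def, hby.ne, hby.ne', hxb.ne, hxb.ne', hax.ne, hax.ne', hxy.symm,
        hab.symm, hya.ne])
      (by intro u hu; simp at hu; rcases hu with rfl | rfl | rfl | rfl <;> simp)
    rw [Walk.length_cons, Walk.length_cons, Walk.length_cons, Walk.length_nil] at h3
    rw [Walk.length_cons, Walk.length_nil] at h1
    omega

omit [DecidableEq V] in
lemma reach_closed {N : Set V} (hcl : ∀ u w, u ∈ N → G.Adj u w → w ∈ N) :
    ∀ {t v : V}, G.Walk t v → v ∈ N → t ∈ N := by
  intro t v p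
  induction p with
  | nil => exact id
  | cons h _ ih => intro hv; exact hcl _ _ (ih hv) h.symm

variable [Fintype V]

lemma finalIso {a b : V} (hab : a ≠ b)
    (hadj : ∀ u v : V, G.Adj u v ↔
      (((u = a ∨ u = b) ∧ ¬(v = a ∨ v = b)) ∨ (¬(u = a ∨ u = b) ∧ (v = a ∨ v = b)))) :
    Nonempty (G ≃g completeBipartiteGraph (Fin 2) (Fin (Fintype.card V - 2))) := by
  classical
  set p : V → Prop := fun v => v = a ∨ v = b with hp
  have hcard2 : Fintype.card {v // p v} = 2 := by
    have hfil : (Finset.univ.filter p) = {a, b} := by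
      ext v
      simp [hp]
    rw [Fintype.card_subtype, hfil, Finset.card_pair hab]
  have hcardc : Fintype.card {v // ¬ p v} = Fintype.card V - 2 := by
    rw [Fintype.card_subtype_compl, hcard2]
  let e2 : {v // p v} ≃ Fin 2 := Fintype.equivFinOfCardEq hcard2
  let e3 : {v // ¬ p v} ≃ Fin (Fintype.card V - 2) := Fintype.equivFinOfCardEq hcardc
  let e : V ≃ (Fin 2) ⊕ (Fin (Fintype.card V - 2)) :=
    (Equiv.sumCompl p).symm.trans (Equiv.sumCongr e2 e3)
  refine ⟨⟨e, ?_⟩⟩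
  intro u v
  show (completeBipartiteGraph _ _).Adj (e u) (e v) ↔ G.Adj u v
  rw [hadj u v]
  have heL : ∀ z (hz : p z), e z = Sum.inl (e2 ⟨z, hz⟩) := by
    intro z hz
    simp [e, Equiv.sumCompl_symm_apply_of_pos hz]
  have heR : ∀ z (hz : ¬ p z), e z = Sum.inr (e3 ⟨z, hz⟩) := by
    intro z hz
    simp [e, Equiv.sumCompl_symm_apply_of_neg hz]
  by_cases hu : p u <;> by_cases hv : p v
  · rw [heL u hu, heL v hv]; simp only [hp] at hu hv; simp; tauto
  · rw [heL u hu, heR v hv]; simp only [hp] at hu hv; simp; tauto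
  · rw [heR u hu, heL v hv]; simp only [hp] at hu hv; simp; tauto
  · rw [heR u hu, heR v hv]; simp only [hp] at hu hv; simp; tauto

lemma charOf (hcyc : ∀ (v : V) (c : G.Walk v v), c.IsCycle → c.length = 4)
    {a b : V} (hab : a ≠ b) (hnadj : ¬ G.Adj a b)
    (hstar : ∀ v, v ≠ a → v ≠ b → G.Adj a v ∧ G.Adj b v) :
    Nonempty (G ≃g completeBipartiteGraph (Fin 2) (Fin (Fintype.card V - 2))) := by
  apply finalIso hab
  intro u v
  constructor
  · intro huv
    by_cases hu : u = a ∨ u = b <;> by_cases hv : v = a ∨ v = b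
    · exfalso
      rcases hu with rfl | rfl <;> rcases hv with rfl | rfl
      · exact huv.ne rfl
      · exact hnadj huv
      · exact hnadj huv.symm
      · exact huv.ne rfl
    · exact Or.inl ⟨hu, hv⟩
    · exact Or.inr ⟨hu, hv⟩
    · exfalso
      push_neg at hu hv
      exact noTri hcyc ((hstar u hu.1 hu.2).1) huv ((hstar v hv.1 hv.2).1).symm
  · rintro (⟨hu, hv⟩ | ⟨hu, hv⟩)
    · push_neg at hv
      rcases hu with rfl | rfl
      · exact (hstar v hv.1 hv.2).1
      · exact (hstar v hv.1 hv.2).2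
    · push_neg at hu
      rcases hv with rfl | rfl
      · exact (hstar u hu.1 hu.2).1.symm
      · exact (hstar u hu.1 hu.2).2.symm

lemma exists_cycle4 (hconn : G.Connected)
    (hne : ∀ v : V, (G.induce {u | u ≠ v}).Connected)
    (hn : 4 ≤ Fintype.card V)
    (hcyc : ∀ (v : V) (c : G.Walk v v), c.IsCycle → c.length = 4) :
    ∃ a x b y : V, G.Adj a x ∧ G.Adj x b ∧ G.Adj b y ∧ G.Adj y a ∧
      a ≠ b ∧ x ≠ y := by
  classical
  have hdeg : ∀ v : V, 2 ≤ G.degree v := by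
    intro v
    obtain ⟨t, ht⟩ := Fintype.exists_ne_of_one_lt_card (by omega) v
    obtain ⟨p⟩ := hconn.preconnected v t
    obtain ⟨u, hu⟩ : ∃ u, G.Adj v u := by
      cases p with
      | nil => exact absurd rfl ht.symm
      | cons h _ => exact ⟨_, h⟩
    have hvu : v ≠ u := hu.ne
    obtain ⟨t', ht'⟩ : ∃ t' : V, t' ≠ v ∧ t' ≠ u := by
      have hsub : ({v, u} : Finset V) ⊆ Finset.univ := Finset.subset_univ _
      have hcard : (Finset.univ \ ({v, u} : Finset V)).card ≠ 0 := by
        rw [Finset.card_sdiff_of_subset hsub]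
        have : ({v, u} : Finset V).card ≤ 2 := Finset.card_insert_le _ _ |>.trans (by simp)
        have := Finset.card_univ (α := V)
        omega
      obtain ⟨t', ht'⟩ := Finset.card_ne_zero.mp hcard |>.exists_mem
      simp only [Finset.mem_sdiff, Finset.mem_insert, Finset.mem_singleton] at ht'
      push_neg at ht'
      exact ⟨t', ht'.2⟩
    obtain ⟨q⟩ := (hne u).preconnected ⟨v, hvu⟩ ⟨t', ht'.2⟩
    obtain ⟨u', hu'⟩ : ∃ u' : V, G.Adj v u' ∧ u' ≠ u := by
      cases q with
      | nil => exact absurd rfl ht'.1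
      | @cons _ m _ h _ => exact ⟨m.1, h, m.2⟩
    rw [← G.card_neighborFinset_eq_degree]
    rw [Nat.succ_le_iff]
    apply Finset.one_lt_card.mpr
    exact ⟨u, by simpa using hu, u', by simpa using hu'.1, fun h => hu'.2 h.symm⟩
  have hnac : ¬ G.IsAcyclic := by
    intro hac
    have htree : G.IsTree := ⟨hconn, hac⟩
    have hE := htree.card_edgeFinset
    have hsum := G.sum_degrees_eq_twice_card_edges
    have hge : Fintype.card V * 2 ≤ ∑ v, G.degree v := by
      calc Fintype.card V * 2 = ∑ _v : V, 2 := by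
            rw [Finset.sum_const, Finset.card_univ, smul_eq_mul]
        _ ≤ ∑ v, G.degree v := Finset.sum_le_sum fun v _ => hdeg v
    omega
  unfold IsAcyclic at hnac
  push_neg at hnac
  obtain ⟨v, c, hc⟩ := hnac
  have hlen := hcyc v c hc
  cases c with
  | nil => simp at hlen
  | cons h1 c =>
  cases c with
  | nil => exact absurd rfl h1.ne
  | cons h2 c =>
  cases c with
  | nil => simp [Walk.length_cons] at hlen
  | cons h3 c =>
  cases c with
  | nil => simp [Walk.length_cons] at hlen
  | cons h4 c =>
  have hc0 : c.length = 0 := by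
    simp only [Walk.length_cons] at hlen
    omega
  cases c with
  | cons h5 c => simp [Walk.length_cons] at hc0
  | nil =>
  have hnd := hc.2
  simp only [Walk.support_cons, Walk.support_nil, List.tail_cons, List.nodup_cons,
    List.mem_cons, List.mem_singleton, List.not_mem_nil, or_false] at hnd
  push_neg at hnd
  obtain ⟨⟨h_xb, h_xy, h_xv⟩, ⟨h_by, h_bv⟩, h_yv⟩ := hnd
  exact ⟨v, _, _, _, h1, h2, h3, h4, h_bv.symm, h_xy⟩

end Stmt13Aux

open Stmt13Aux in
/-- A 2-connected graph on `n ≥ 4` vertices in which every (not necessarily induced)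
cycle has length exactly 4 is isomorphic to the complete bipartite graph `K_{2,n-2}`. -/
theorem stmt_13 {V : Type*} [Fintype V] [DecidableEq V] (G : SimpleGraph V)
    (h2 : TwoConnected G) (hn : 4 ≤ Fintype.card V)
    (hcyc : ∀ (v : V) (c : G.Walk v v), c.IsCycle → c.length = 4) :
    Nonempty (G ≃g completeBipartiteGraph (Fin 2) (Fin (Fintype.card V - 2))) := by
  obtain ⟨hconn, -, hne⟩ := h2
  obtain ⟨a, x, b, y, hax, hxb, hby, hya, hab, hxy⟩ := exists_cycle4 hconn hne hn hcyc
  set N : Set V := {v | (G.Adj a v ∧ G.Adj b v) ∨ (G.Adj x v ∧ G.Adj y v)} with hNdef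
  have haN : a ∈ N := Or.inr ⟨hax.symm, hya⟩
  have hbN : b ∈ N := Or.inr ⟨hxb, hby.symm⟩
  have hxN : x ∈ N := Or.inl ⟨hax, hxb.symm⟩
  have hyN : y ∈ N := Or.inl ⟨hya.symm, hby⟩
  have hclosed : ∀ u w', u ∈ N → G.Adj u w' → w' ∈ N := by
    intro u w' hu huw'
    by_cases hw4 : w' = a ∨ w' = b ∨ w' = x ∨ w' = y
    · rcases hw4 with rfl | rfl | rfl | rfl
      · exact haN
      · exact hbN
      · exact hxN
      · exact hyN
    push_neg at hw4
    obtain ⟨hw'a, hw'b, hw'x, hw'y⟩ := hw4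
    by_cases hu4 : u = a ∨ u = b ∨ u = x ∨ u = y
    · rcases hu4 with h | h | h | h
      · rw [h] at huw'
        exact Or.inl ⟨huw', key hcyc hax hxb hby hya hab hxy (hne a) hw'a hw'x hw'b hw'y huw'⟩
      · rw [h] at huw'
        exact Or.inl ⟨key hcyc hby hya hax hxb hab.symm hxy.symm (hne b)
          hw'b hw'y hw'a hw'x huw', huw'⟩
      · rw [h] at huw'
        exact Or.inr ⟨huw', key hcyc hxb hby hya hax hxy hab.symm (hne x)
          hw'x hw'b hw'y hw'a huw'⟩
      · rw [h] at huw'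
        exact Or.inr ⟨key hcyc hya hax hxb hby hxy.symm hab (hne y)
          hw'y hw'a hw'x hw'b huw', huw'⟩
    push_neg at hu4
    obtain ⟨hua, hub, hux, huy⟩ := hu4
    rcases hu with ⟨hau, hbu⟩ | ⟨hxu, hyu⟩
    · -- u is adjacent to a and b : 4-cycles a-u-b-x and a-u-b-y
      have h1 : G.Adj x w' := key hcyc hbu.symm hxb.symm hax.symm hau hux hab.symm (hne u)
        huw'.ne' hw'b hw'x hw'a huw'
      have h2 : G.Adj y w' := key hcyc hbu.symm hby hya hau huy hab.symm (hne u)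
        huw'.ne' hw'b hw'y hw'a huw'
      exact Or.inr ⟨h1, h2⟩
    · -- u is adjacent to x and y : 4-cycles x-u-y-a and x-u-y-b
      have h1 : G.Adj a w' := key hcyc hyu.symm hya hax hxu hua hxy.symm (hne u)
        huw'.ne' hw'y hw'a hw'x huw'
      have h2 : G.Adj b w' := key hcyc hyu.symm hby.symm hxb.symm hxu hub hxy.symm (hne u)
        huw'.ne' hw'y hw'b hw'x huw'
      exact Or.inl ⟨h1, h2⟩
  have hNall : ∀ v : V, v ∈ N := by
    intro v
    obtain ⟨p⟩ := hconn.preconnected v a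
    exact reach_closed hclosed p haN
  by_cases hQ : ∃ u, (u ≠ a ∧ u ≠ b ∧ u ≠ x ∧ u ≠ y) ∧ G.Adj x u ∧ G.Adj y u
  · -- the small side is {x, y}
    obtain ⟨u0, ⟨hu0a, hu0b, hu0x, hu0y⟩, hu0adjx, hu0adjy⟩ := hQ
    have hstar : ∀ v, v ≠ x → v ≠ y → G.Adj x v ∧ G.Adj y v := by
      intro v hvx hvy
      by_cases hva : v = a
      · subst hva; exact ⟨hax.symm, hya⟩
      by_cases hvb : v = b
      · subst hvb; exact ⟨hxb, hby.symm⟩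
      rcases hNall v with ⟨hav, hbv⟩ | hQv
      · exfalso
        by_cases hvu : v = u0
        · subst hvu
          exact noTri hcyc hav hu0adjx.symm hax.symm
        · exact noSix hcyc hav hbv.symm hxb.symm hu0adjx hu0adjy.symm hya
            hab hax.ne hu0a.symm hvx hvu hvy hu0b.symm hby.ne hxy
      · exact hQv
    have hxynadj : ¬ G.Adj x y := fun h => noTri hcyc h hya hax
    exact charOf hcyc hxy hxynadj hstar
  · -- the small side is {a, b}
    push_neg at hQ
    have hstar : ∀ v, v ≠ a → v ≠ b → G.Adj a v ∧ G.Adj b v := by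
      intro v hva hvb
      by_cases hvx : v = x
      · subst hvx; exact ⟨hax, hxb.symm⟩
      by_cases hvy : v = y
      · subst hvy; exact ⟨hya.symm, hby⟩
      rcases hNall v with hP | ⟨hxv, hyv⟩
      · exact hP
      · exact absurd (⟨hxv, hyv⟩ : G.Adj x v ∧ G.Adj y v) (by
          have := hQ v ⟨hva, hvb, hvx, hvy⟩
          tauto)
    have habnadj : ¬ G.Adj a b := fun h => noTri hcyc h hxb.symm hax.symm
    exact charOf hcyc hab habnadj hstar
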